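/- Let (V, ‖·‖_V) be a finite-dimensional complex normed vector space and let ε > 0. Then there exist l ∈ ℕ and a surjective ℂ-linear map π : ℂ^l → V such that, denoting by [l₁](v) := inf{‖u‖₁ : u ∈ ℂ^l, π(u) = v} the quotient norm on V induced by the l¹-norm ‖u‖₁ = Σᵢ|uᵢ| on ℂ^l, one has e^{−ε}·[l₁](v) ≤ ‖v‖_V ≤ [l₁](v) for all v ∈ V. -/

import Mathlib

open scoped BigOperators

private theorem l1_basis_rep (V : Type*) [NormedAddCommGroup V] [NormedSpace ℂ V]
    [FiniteDimensional ℂ V] :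
    ∃ (n : ℕ) (x : Fin n → V) (K : ℝ), 0 ≤ K ∧ (∀ i, ‖x i‖ ≤ 1) ∧
      ∀ v : V, ∃ u : Fin n → ℂ, ∑ i, u i • x i = v ∧ ∑ i, ‖u i‖ ≤ K * ‖v‖ := by
  set n := Module.finrank ℂ V
  set b := Module.finBasis ℂ V
  refine ⟨n, fun i => (‖b i‖ : ℂ)⁻¹ • b i,
    ∑ i, ‖(b.coord i).toContinuousLinearMap‖ * ‖b i‖,
    Finset.sum_nonneg fun i _ => mul_nonneg (norm_nonneg _) (norm_nonneg _), ?_, ?_⟩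
  · intro i
    rw [norm_smul]
    have hb : ‖b i‖ ≠ 0 := norm_ne_zero_iff.mpr (b.ne_zero i)
    simp [hb]
  · intro v
    refine ⟨fun i => b.repr v i * ‖b i‖, ?_, ?_⟩
    · calc ∑ i, (b.repr v i * ‖b i‖) • ((‖b i‖ : ℂ)⁻¹ • b i)
          = ∑ i, b.repr v i • b i := by
            refine Finset.sum_congr rfl fun i _ => ?_
            have hb : (‖b i‖ : ℂ) ≠ 0 := by
              simp [norm_ne_zero_iff.mpr (b.ne_zero i)]
            rw [smul_smul, mul_assoc, mul_inv_cancel₀ hb, mul_one]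
        _ = v := b.sum_repr v
    · rw [Finset.sum_mul]
      refine Finset.sum_le_sum fun i _ => ?_
      rw [norm_mul, Complex.norm_real, norm_norm]
      have h1 : ‖b.repr v i‖ ≤ ‖(b.coord i).toContinuousLinearMap‖ * ‖v‖ := by
        have := (b.coord i).toContinuousLinearMap.le_opNorm v
        simpa [Module.Basis.coord_apply] using this
      calc ‖b.repr v i‖ * ‖b i‖ ≤ (‖(b.coord i).toContinuousLinearMap‖ * ‖v‖) * ‖b i‖ :=
            mul_le_mul_of_nonneg_right h1 (norm_nonneg _)
        _ = ‖(b.coord i).toContinuousLinearMap‖ * ‖b i‖ * ‖v‖ := by ring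

private theorem l1_net (V : Type*) [NormedAddCommGroup V] [NormedSpace ℂ V]
    [FiniteDimensional ℂ V] (δ : ℝ) (hδ : 0 < δ) :
    ∃ (m : ℕ) (y : Fin m → V), (∀ j, ‖y j‖ = 1) ∧
      ∀ v : V, ‖v‖ = 1 → ∃ j, ‖v - y j‖ < δ := by
  have hcs : IsCompact (Metric.sphere (0:V) 1) := isCompact_sphere 0 1
  have hcover : Metric.sphere (0:V) 1 ⊆
      ⋃ x : Metric.sphere (0:V) 1, Metric.ball (x : V) δ := by
    intro v hv
    exact Set.mem_iUnion.2 ⟨⟨v, hv⟩, Metric.mem_ball_self hδ⟩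
  obtain ⟨t, ht⟩ := hcs.elim_finite_subcover _ (fun x => Metric.isOpen_ball) hcover
  refine ⟨t.card, fun j => ((t.equivFin.symm j : Metric.sphere (0:V) 1) : V), ?_, ?_⟩
  · intro j
    have := ((t.equivFin.symm j : Metric.sphere (0:V) 1)).2
    simpa [mem_sphere_iff_norm] using this
  · intro v hv
    have hv' : v ∈ Metric.sphere (0:V) 1 := by simpa [mem_sphere_iff_norm] using hv
    obtain ⟨x, hxt, hx⟩ := Set.mem_iUnion₂.1 (ht hv')
    refine ⟨t.equivFin ⟨x, hxt⟩, ?_⟩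
    simp only [Equiv.symm_apply_apply]
    simpa [dist_eq_norm] using hx

private theorem l1_rep (V : Type*) [NormedAddCommGroup V] [NormedSpace ℂ V]
    [FiniteDimensional ℂ V] (ε : ℝ) (hε : 0 < ε) :
    ∃ (l : ℕ) (x : Fin l → V), (∀ i, ‖x i‖ ≤ 1) ∧
      ∀ v : V, ∃ u : Fin l → ℂ, ∑ i, u i • x i = v ∧
        ∑ i, ‖u i‖ ≤ Real.exp ε * ‖v‖ := by
  obtain ⟨n, xb, K, hK0, hxb, hrepb⟩ := l1_basis_rep V
  set δ : ℝ := min (1/2) (ε/4) with hδdef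
  have hδ0 : 0 < δ := lt_min (by norm_num) (by linarith)
  have hδhalf : δ ≤ 1/2 := min_le_left _ _
  have hδε : δ ≤ ε/4 := min_le_right _ _
  have hδ1 : δ < 1 := lt_of_le_of_lt hδhalf (by norm_num)
  obtain ⟨m, y, hy, hnet⟩ := l1_net V δ hδ0
  -- choose k such that (K+1) * δ^k < ε/2
  obtain ⟨k, hk⟩ : ∃ k : ℕ, δ ^ k < (ε/2) / (K+1) :=
    exists_pow_lt_of_lt_one (by positivity) hδ1
  have hKδk : K * δ ^ k < ε / 2 := by
    have h1 : (K+1) * δ ^ k < ε/2 := by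
      rw [mul_comm]
      exact (lt_div_iff₀ (by linarith)).1 hk
    nlinarith [pow_nonneg hδ0.le k]
  -- the combined family
  set z : Fin n ⊕ Fin m → V := Sum.elim xb y with hzdef
  have hz : ∀ i, ‖z i‖ ≤ 1 := by
    rintro (i | j)
    · exact hxb i
    · exact le_of_eq (hy j)
  -- main induction
  have key : ∀ (k : ℕ) (v : V), ∃ u : Fin n ⊕ Fin m → ℂ,
      ∑ i, u i • z i = v ∧
      ∑ i, ‖u i‖ ≤ ((∑ j ∈ Finset.range k, δ ^ j) + K * δ ^ k) * ‖v‖ := by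
    intro k
    induction k with
    | zero =>
      intro v
      obtain ⟨u, hu, hbd⟩ := hrepb v
      refine ⟨Sum.elim u 0, ?_, ?_⟩
      · rw [Fintype.sum_sum_type]
        simpa [hzdef] using hu
      · rw [Fintype.sum_sum_type]
        simpa using hbd
    | succ k ih =>
      intro v
      by_cases hv : v = 0
      · refine ⟨0, by simp [hv], ?_⟩
        have : (0:ℝ) ≤ ((∑ j ∈ Finset.range (k+1), δ ^ j) + K * δ ^ (k+1)) * ‖v‖ := by
          apply mul_nonneg _ (norm_nonneg _)
          have : (0:ℝ) ≤ ∑ j ∈ Finset.range (k+1), δ ^ j :=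
            Finset.sum_nonneg fun j _ => pow_nonneg hδ0.le j
          nlinarith [pow_nonneg hδ0.le (k+1)]
        simpa using this
      · set c : ℝ := ‖v‖ with hcdef
        have hc : 0 < c := norm_pos_iff.2 hv
        have hcC : (c : ℂ) ≠ 0 := by
          simp [Complex.ofReal_ne_zero, hc.ne']
        set w : V := ((c:ℂ))⁻¹ • v with hwdef
        have hw : ‖w‖ = 1 := by
          rw [hwdef, norm_smul, norm_inv]
          simp only [Complex.norm_real, Real.norm_eq_abs, abs_of_pos hc]
          field_simp
          exact hcdef.symm
        obtain ⟨j, hj⟩ := hnet w hw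
        have hcw : (c:ℂ) • w = v := by
          rw [hwdef, smul_inv_smul₀ hcC]
        set r : V := v - (c:ℂ) • y j with hrdef
        have hr : ‖r‖ ≤ δ * c := by
          have : r = (c:ℂ) • (w - y j) := by
            rw [smul_sub, hcw, hrdef]
          rw [this, norm_smul]
          simp only [Complex.norm_real, Real.norm_eq_abs, abs_of_pos hc]
          calc c * ‖w - y j‖ ≤ c * δ := by
                exact mul_le_mul_of_nonneg_left hj.le hc.le
            _ = δ * c := mul_comm _ _
        obtain ⟨u', hu', hbd'⟩ := ih r
        classical
        set s : (Fin n ⊕ Fin m) → ℂ := Pi.single (Sum.inr j) ((c:ℂ)) with hsdef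
        refine ⟨u' + s, ?_, ?_⟩
        · have hsingle : ∑ i, s i • z i = (c:ℂ) • y j := by
            rw [Finset.sum_eq_single (Sum.inr j)]
            · simp [hzdef, hsdef]
            · intro i _ hi
              simp [hsdef, Pi.single_apply, hi]
            · intro h
              exact absurd (Finset.mem_univ _) h
          simp only [Pi.add_apply, add_smul, Finset.sum_add_distrib, hu', hsingle]
          rw [hrdef]
          abel
        · have htri : ∑ i, ‖(u' + s) i‖
              ≤ (∑ i, ‖u' i‖) + ∑ i, ‖s i‖ := by
            rw [← Finset.sum_add_distrib]
            exact Finset.sum_le_sum fun i _ => norm_add_le _ _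
          have hsingleabs : ∑ i, ‖s i‖ = c := by
            rw [Finset.sum_eq_single (Sum.inr j)]
            · simp [hsdef, abs_of_pos hc]
            · intro i _ hi
              simp [hsdef, Pi.single_apply, hi]
            · intro h
              exact absurd (Finset.mem_univ _) h
          have hS0 : (0:ℝ) ≤ (∑ j ∈ Finset.range k, δ ^ j) + K * δ ^ k := by
            have : (0:ℝ) ≤ ∑ j ∈ Finset.range k, δ ^ j :=
              Finset.sum_nonneg fun j _ => pow_nonneg hδ0.le j
            nlinarith [pow_nonneg hδ0.le k]
          have hbd'' : ∑ i, ‖u' i‖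
              ≤ ((∑ j ∈ Finset.range k, δ ^ j) + K * δ ^ k) * (δ * c) :=
            hbd'.trans (mul_le_mul_of_nonneg_left hr hS0)
          have hgeom : ∑ j ∈ Finset.range (k+1), δ ^ j
              = 1 + δ * ∑ j ∈ Finset.range k, δ ^ j := by
            rw [geom_sum_succ]; ring
          calc ∑ i, ‖(u' + s) i‖
              ≤ (∑ i, ‖u' i‖) + c := by
                rw [← hsingleabs]; exact htri
            _ ≤ ((∑ j ∈ Finset.range k, δ ^ j) + K * δ ^ k) * (δ * c) + c := by
                linarith
            _ = ((∑ j ∈ Finset.range (k+1), δ ^ j) + K * δ ^ (k+1)) * c := by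
                rw [hgeom]; ring
  -- the coefficient is at most exp ε
  have hcoef : (∑ j ∈ Finset.range k, δ ^ j) + K * δ ^ k ≤ Real.exp ε := by
    have hgs : (∑ j ∈ Finset.range k, δ ^ j) * (δ - 1) = δ ^ k - 1 := geom_sum_mul δ k
    have hδk0 : (0:ℝ) ≤ δ ^ k := pow_nonneg hδ0.le k
    have hexp : 1 + ε ≤ Real.exp ε := by
      have := Real.add_one_le_exp ε
      linarith
    have hS : (∑ j ∈ Finset.range k, δ ^ j) ≤ 1 + ε/2 := by
      nlinarith [Finset.sum_nonneg (fun j (_ : j ∈ Finset.range k) => pow_nonneg hδ0.le j)]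
    linarith
  -- transport along finSumFinEquiv
  refine ⟨n + m, z ∘ finSumFinEquiv.symm, fun i => hz _, fun v => ?_⟩
  obtain ⟨u, hu, hbd⟩ := key k v
  refine ⟨u ∘ finSumFinEquiv.symm, ?_, ?_⟩
  · rw [← hu]
    exact Fintype.sum_equiv finSumFinEquiv.symm _ _ fun i => rfl
  · have : ∑ i, ‖(u ∘ finSumFinEquiv.symm) i‖ = ∑ i, ‖u i‖ :=
      Fintype.sum_equiv finSumFinEquiv.symm _ _ fun i => rfl
    rw [this]
    exact hbd.trans (mul_le_mul_of_nonneg_right hcoef (norm_nonneg _))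

/-- Every norm on a finite-dimensional complex vector space is, up to a multiplicative
factor `e^{ε}`, a quotient of the `l¹`-norm on some `ℂ^l`: there exist `l ∈ ℕ` and a
surjective linear map `π : ℂ^l → V` such that the quotient norm
`[l₁](v) = inf{‖u‖₁ : π(u) = v}` satisfies `e^{-ε}·[l₁](v) ≤ ‖v‖_V ≤ [l₁](v)`. -/
theorem exists_l1_quotient_approximation
    (V : Type*) [NormedAddCommGroup V] [NormedSpace ℂ V] [FiniteDimensional ℂ V]
    (ε : ℝ) (hε : 0 < ε) :
    ∃ (l : ℕ) (π : (Fin l → ℂ) →ₗ[ℂ] V), Function.Surjective π ∧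
      ∀ v : V,
        Real.exp (-ε) *
            sInf {c : ℝ | ∃ u : Fin l → ℂ, π u = v ∧ c = ∑ i, ‖u i‖} ≤ ‖v‖ ∧
        ‖v‖ ≤ sInf {c : ℝ | ∃ u : Fin l → ℂ, π u = v ∧ c = ∑ i, ‖u i‖} := by
  obtain ⟨l, x, hx, hrep⟩ := l1_rep V ε hε
  refine ⟨l, Fintype.linearCombination ℂ x, ?_, ?_⟩
  · intro v
    obtain ⟨u, hu, -⟩ := hrep v
    exact ⟨u, by rw [Fintype.linearCombination_apply]; exact hu⟩
  · intro v
    set S : Set ℝ := {c : ℝ | ∃ u : Fin l → ℂ,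
      Fintype.linearCombination ℂ x u = v ∧ c = ∑ i, ‖u i‖} with hSdef
    have hlb : ∀ c ∈ S, ‖v‖ ≤ c := by
      rintro c ⟨u, hu, rfl⟩
      rw [Fintype.linearCombination_apply] at hu
      calc ‖v‖ = ‖∑ i, u i • x i‖ := by rw [hu]
        _ ≤ ∑ i, ‖u i • x i‖ := norm_sum_le _ _
        _ ≤ ∑ i, ‖u i‖ := by
            refine Finset.sum_le_sum fun i _ => ?_
            rw [norm_smul]
            calc ‖u i‖ * ‖x i‖ ≤ ‖u i‖ * 1 :=
                  mul_le_mul_of_nonneg_left (hx i) (norm_nonneg _)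
              _ = ‖u i‖ := mul_one _
    obtain ⟨u, hu, hbd⟩ := hrep v
    have huS : (∑ i, ‖u i‖) ∈ S :=
      ⟨u, by rw [Fintype.linearCombination_apply]; exact hu, rfl⟩
    have hne : S.Nonempty := ⟨_, huS⟩
    have hbdd : BddBelow S := ⟨‖v‖, hlb⟩
    constructor
    · have h1 : sInf S ≤ ∑ i, ‖u i‖ := csInf_le hbdd huS
      have h2 : sInf S ≤ Real.exp ε * ‖v‖ := h1.trans hbd
      have h3 : Real.exp (-ε) * sInf S ≤ Real.exp (-ε) * (Real.exp ε * ‖v‖) :=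
        mul_le_mul_of_nonneg_left h2 (Real.exp_nonneg _)
      calc Real.exp (-ε) * sInf S ≤ Real.exp (-ε) * (Real.exp ε * ‖v‖) := h3
        _ = ‖v‖ := by rw [← mul_assoc, ← Real.exp_add]; simp
    · exact le_csInf hne hlb
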